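/- arXiv:1708.03829 — 3 statements merged into one kernel-verified Lean document; each statement's English description precedes it below -/
import Mathlib

section
/- Suppose H is twice continuously differentiable, π is continuously differentiable, the identity H_u(t, x, λ, π(t, x, λ, μ), μ) = 0 holds for all (t, x, λ, μ), and H_{uu} evaluated at (t, x, λ, π(t, x, λ, μ), μ) is invertible. Then the second partial derivative of the regular Hamiltonian with respect to the state satisfies Ĥ_{xx}(t, x, λ, μ) = H_{xx}(t, x, λ, π(t, x, λ, μ), μ) − π_x(t, x, λ, μ)ᵀ · H_{uu}(t, x, λ, π(t, x, λ, μ), μ) · π_x(t, x, λ, μ). -/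
open Matrix

section Aux
variable {E U G : Type*} [NormedAddCommGroup E] [NormedSpace ℝ E]
  [NormedAddCommGroup U] [NormedSpace ℝ U] [NormedAddCommGroup G] [NormedSpace ℝ G]

lemma fderiv_eval_along {F : E → ℝ} (hF : ContDiff ℝ 2 F)
    {c : G → E} {C : G →L[ℝ] E} {x : G} (hc : HasFDerivAt c C x) (v₀ : E) (v : G) :
    fderiv ℝ (fun x' => fderiv ℝ F (c x') v₀) x v
      = fderiv ℝ (fderiv ℝ F) (c x) (C v) v₀ := by
  have hf' : ContDiff ℝ 1 (fderiv ℝ F) := hF.fderiv_right (by norm_num)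
  have h1 : HasFDerivAt (fderiv ℝ F) (fderiv ℝ (fderiv ℝ F) (c x)) (c x) :=
    (hf'.differentiable one_ne_zero (c x)).hasFDerivAt
  have h2 : HasFDerivAt (fun x' => fderiv ℝ F (c x'))
      ((fderiv ℝ (fderiv ℝ F) (c x)).comp C) x := h1.comp x hc
  have h3 : HasFDerivAt (fun x' => fderiv ℝ F (c x') v₀)
      ((ContinuousLinearMap.apply ℝ ℝ v₀).comp
        ((fderiv ℝ (fderiv ℝ F) (c x)).comp C)) x :=
    (ContinuousLinearMap.apply ℝ ℝ v₀).hasFDerivAt.comp x h2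
  rw [h3.fderiv]; rfl

lemma fderiv_partial_fst {F : E × U → ℝ} (hF : Differentiable ℝ F) (x1 : E) (u0 : U) (w : E) :
    fderiv ℝ (fun x2 => F (x2, u0)) x1 w = fderiv ℝ F (x1, u0) (w, 0) := by
  have h : HasFDerivAt (fun x2 : E => (x2, u0))
      ((ContinuousLinearMap.id ℝ E).prod 0) x1 :=
    HasFDerivAt.prodMk (hasFDerivAt_id x1) (hasFDerivAt_const u0 x1)
  have h2 : HasFDerivAt (fun x2 => F (x2, u0))
      ((fderiv ℝ F (x1, u0)).comp ((ContinuousLinearMap.id ℝ E).prod 0)) x1 :=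
    (hF (x1, u0)).hasFDerivAt.comp x1 h
  rw [h2.fderiv]; rfl

lemma fderiv_partial_snd {F : E × U → ℝ} (hF : Differentiable ℝ F) (x1 : E) (u0 : U) (b : U) :
    fderiv ℝ (fun u => F (x1, u)) u0 b = fderiv ℝ F (x1, u0) (0, b) := by
  have h : HasFDerivAt (fun u : U => (x1, u))
      ((0 : U →L[ℝ] E).prod (ContinuousLinearMap.id ℝ U)) u0 :=
    HasFDerivAt.prodMk (hasFDerivAt_const x1 u0) (hasFDerivAt_id u0)
  have h2 : HasFDerivAt (fun u => F (x1, u))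
      ((fderiv ℝ F (x1, u0)).comp ((0 : U →L[ℝ] E).prod (ContinuousLinearMap.id ℝ U))) u0 :=
    (hF (x1, u0)).hasFDerivAt.comp u0 h
  rw [h2.fderiv]; rfl

lemma snd_fderiv_symm {F : E → ℝ} (hF : ContDiff ℝ 2 F) (p : E) (a b : E) :
    fderiv ℝ (fderiv ℝ F) p a b = fderiv ℝ (fderiv ℝ F) p b a := by
  have hf' : ContDiff ℝ 1 (fderiv ℝ F) := hF.fderiv_right (by norm_num)
  exact second_derivative_symmetric
    (fun y => (hF.differentiable two_ne_zero y).hasFDerivAt)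
    ((hf'.differentiable one_ne_zero p).hasFDerivAt) a b

lemma huu_entry {F : E × U → ℝ} (hF : ContDiff ℝ 2 F) (x1 : E) (u0 : U) (a b : U) :
    fderiv ℝ (fun u => fderiv ℝ (fun u' => F (x1, u')) u b) u0 a
      = fderiv ℝ (fderiv ℝ F) (x1, u0) (0, a) (0, b) := by
  have hFd := hF.differentiable two_ne_zero
  have hfun : (fun u => fderiv ℝ (fun u' => F (x1, u')) u b)
      = fun u => fderiv ℝ F (x1, u) ((0 : E), b) :=
    funext fun u => fderiv_partial_snd hFd x1 u b
  rw [hfun]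
  have hc : HasFDerivAt (fun u : U => (x1, u))
      ((0 : U →L[ℝ] E).prod (ContinuousLinearMap.id ℝ U)) u0 :=
    HasFDerivAt.prodMk (hasFDerivAt_const x1 u0) (hasFDerivAt_id u0)
  have := fderiv_eval_along hF hc (((0 : E), b)) a
  simpa using this

lemma regular_hessian {F : E × U → ℝ} {P : E → U}
    (hF : ContDiff ℝ 2 F) (hP : ContDiff ℝ 1 P)
    (hstat : ∀ x', fderiv ℝ (fun u => F (x', u)) (P x') = 0) (x : E) (v w : E) :
    fderiv ℝ (fun x1 => fderiv ℝ (fun x2 => F (x2, P x2)) x1 w) x v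
      = fderiv ℝ (fun x1 => fderiv ℝ (fun x2 => F (x2, P x)) x1 w) x v
        - fderiv ℝ (fderiv ℝ F) (x, P x) (0, fderiv ℝ P x w) (0, fderiv ℝ P x v) := by
  have hFd : Differentiable ℝ F := hF.differentiable two_ne_zero
  have hPd : Differentiable ℝ P := hP.differentiable one_ne_zero
  have hγ : ∀ x' : E, HasFDerivAt (fun y : E => (y, P y))
      ((ContinuousLinearMap.id ℝ E).prod (fderiv ℝ P x')) x' :=
    fun x' => HasFDerivAt.prodMk (hasFDerivAt_id x') (hPd x').hasFDerivAt
  have hstat0 : ∀ (x' : E) (c : U), fderiv ℝ F (x', P x') ((0 : E), c) = 0 := by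
    intro x' c
    have h := fderiv_partial_snd hFd x' (P x') c
    rw [hstat x'] at h
    simpa using h.symm
  have hinner : ∀ (x' : E) (b : E),
      fderiv ℝ (fun x2 => F (x2, P x2)) x' b = fderiv ℝ F (x', P x') (b, 0) := by
    intro x' b
    have h2 : HasFDerivAt (fun x2 => F (x2, P x2))
        ((fderiv ℝ F (x', P x')).comp
          ((ContinuousLinearMap.id ℝ E).prod (fderiv ℝ P x'))) x' :=
      (hFd (x', P x')).hasFDerivAt.comp x' (hγ x')
    rw [h2.fderiv]
    show fderiv ℝ F (x', P x') (b, fderiv ℝ P x' b) = _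
    have hb : ((b : E), fderiv ℝ P x' b) = (b, (0 : U)) + ((0 : E), fderiv ℝ P x' b) := by
      simp
    rw [hb, map_add, hstat0, add_zero]
  set B := fderiv ℝ (fderiv ℝ F) (x, P x) with hB
  have hsym : ∀ a b : E × U, B a b = B b a := fun a b => snd_fderiv_symm hF _ a b
  have hG : ∀ (d : E) (c : U), B (d, fderiv ℝ P x d) ((0 : E), c) = 0 := by
    intro d c
    have hz : (fun x' : E => fderiv ℝ F (x', P x') ((0 : E), c)) = fun _ => (0 : ℝ) :=
      funext fun x' => hstat0 x' c
    have h0 : fderiv ℝ (fun x' : E => fderiv ℝ F (x', P x') ((0 : E), c)) x d = 0 := by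
      rw [hz]; simp
    rw [← h0]
    exact (fderiv_eval_along hF (hγ x) (((0 : E), c)) d).symm
  have hL : fderiv ℝ (fun x1 => fderiv ℝ (fun x2 => F (x2, P x2)) x1 w) x v
      = B (v, fderiv ℝ P x v) (w, 0) := by
    have hfun : (fun x1 => fderiv ℝ (fun x2 => F (x2, P x2)) x1 w)
        = fun x1 => fderiv ℝ F (x1, P x1) (w, 0) := funext fun x1 => hinner x1 w
    rw [hfun]
    exact fderiv_eval_along hF (hγ x) ((w, (0 : U))) v
  have hR : fderiv ℝ (fun x1 => fderiv ℝ (fun x2 => F (x2, P x)) x1 w) x v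
      = B (v, (0 : U)) (w, 0) := by
    have hfun : (fun x1 => fderiv ℝ (fun x2 => F (x2, P x)) x1 w)
        = fun x1 => fderiv ℝ F (x1, P x) (w, 0) :=
      funext fun x1 => fderiv_partial_fst hFd x1 (P x) w
    rw [hfun]
    have hc : HasFDerivAt (fun y : E => (y, P x))
        ((ContinuousLinearMap.id ℝ E).prod 0) x :=
      HasFDerivAt.prodMk (hasFDerivAt_id x) (hasFDerivAt_const (P x) x)
    exact fderiv_eval_along hF hc ((w, (0 : U))) v
  rw [hL, hR]
  have hv : ((v : E), fderiv ℝ P x v) = (v, (0 : U)) + ((0 : E), fderiv ℝ P x v) := by simp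
  rw [hv, map_add, ContinuousLinearMap.add_apply]
  have h1 : B ((0 : E), fderiv ℝ P x v) (w, 0) = B (w, 0) ((0 : E), fderiv ℝ P x v) :=
    hsym _ _
  have h2 : B (w, (0 : U)) ((0 : E), fderiv ℝ P x v)
      = - B ((0 : E), fderiv ℝ P x w) ((0 : E), fderiv ℝ P x v) := by
    have h3 := hG w (fderiv ℝ P x v)
    have hw : ((w : E), fderiv ℝ P x w) = (w, (0 : U)) + ((0 : E), fderiv ℝ P x w) := by simp
    rw [hw, map_add, ContinuousLinearMap.add_apply] at h3
    linarith
  rw [h1, h2]; ring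

end Aux


/-- If `H` is twice continuously differentiable, `π` is continuously
differentiable, the stationarity condition `H_u ∘ π = 0` holds everywhere, and `H_{uu}`
evaluated along `π` is invertible, then the second partial derivative of the regular
Hamiltonian `Ĥ(t,x,λ,μ) = H(t,x,λ,π(t,x,λ,μ),μ)` with respect to the state satisfies
`Ĥ_{xx} = H_{xx} − π_xᵀ · H_{uu} · π_x` (all evaluated along `π`). -/
theorem stmt4 (n m : ℕ)
    (H : ℝ → (Fin n → ℝ) → (Fin n → ℝ) → (Fin m → ℝ) → ℝ → ℝ)
    (pi : ℝ → (Fin n → ℝ) → (Fin n → ℝ) → ℝ → (Fin m → ℝ))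
    (hH : ContDiff ℝ 2
      (fun p : ℝ × (Fin n → ℝ) × (Fin n → ℝ) × (Fin m → ℝ) × ℝ =>
        H p.1 p.2.1 p.2.2.1 p.2.2.2.1 p.2.2.2.2))
    (hpi : ContDiff ℝ 1
      (fun p : ℝ × (Fin n → ℝ) × (Fin n → ℝ) × ℝ =>
        pi p.1 p.2.1 p.2.2.1 p.2.2.2))
    (hstat : ∀ (t : ℝ) (x lam : Fin n → ℝ) (μ : ℝ),
      fderiv ℝ (fun u => H t x lam u μ) (pi t x lam μ) = 0)
    (t : ℝ) (x lam : Fin n → ℝ) (μ : ℝ)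
    -- the Hessian of `H` in the control, evaluated at `(t, x, λ, π(t,x,λ,μ), μ)`
    (Huu : Matrix (Fin m) (Fin m) ℝ)
    (hHuu : Huu = Matrix.of fun i j =>
      fderiv ℝ (fun u => fderiv ℝ (fun u' => H t x lam u' μ) u (Pi.single j 1))
        (pi t x lam μ) (Pi.single i 1))
    -- the Hessian of `H` in the state with the control frozen at `π(t,x,λ,μ)`
    (Hxx : Matrix (Fin n) (Fin n) ℝ)
    (hHxx : Hxx = Matrix.of fun i j =>
      fderiv ℝ
        (fun x1 => fderiv ℝ (fun x2 => H t x2 lam (pi t x lam μ) μ) x1 (Pi.single j 1))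
        x (Pi.single i 1))
    -- the Hessian of the regular Hamiltonian `Ĥ` in the state
    (Hhatxx : Matrix (Fin n) (Fin n) ℝ)
    (hHhatxx : Hhatxx = Matrix.of fun i j =>
      fderiv ℝ
        (fun x1 => fderiv ℝ (fun x2 => H t x2 lam (pi t x2 lam μ) μ) x1 (Pi.single j 1))
        x (Pi.single i 1))
    -- the Jacobian `π_x` (an `m × n` matrix)
    (pix : Matrix (Fin m) (Fin n) ℝ)
    (hpix : pix = Matrix.of fun i j =>
      fderiv ℝ (fun x' => pi t x' lam μ) x (Pi.single j 1) i)
    (hinv : IsUnit Huu.det) :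
    Hhatxx = Hxx - pix.transpose * Huu * pix := by
  subst hHuu hHxx hHhatxx hpix
  have hF : ContDiff ℝ 2 (fun p : (Fin n → ℝ) × (Fin m → ℝ) => H t p.1 lam p.2 μ) :=
    hH.comp (contDiff_const.prodMk (contDiff_fst.prodMk (contDiff_const.prodMk
      (contDiff_snd.prodMk contDiff_const))))
  have hP : ContDiff ℝ 1 (fun x' : Fin n → ℝ => pi t x' lam μ) :=
    hpi.comp (contDiff_const.prodMk (contDiff_id.prodMk (contDiff_const.prodMk contDiff_const)))
  ext i j
  simp only [Matrix.sub_apply, Matrix.of_apply]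
  have key : fderiv ℝ
        (fun x1 => fderiv ℝ (fun x2 => H t x2 lam (pi t x2 lam μ) μ) x1 (Pi.single j 1))
        x (Pi.single i 1)
      = fderiv ℝ
          (fun x1 => fderiv ℝ (fun x2 => H t x2 lam (pi t x lam μ) μ) x1 (Pi.single j 1))
          x (Pi.single i 1)
        - fderiv ℝ (fderiv ℝ (fun p : (Fin n → ℝ) × (Fin m → ℝ) => H t p.1 lam p.2 μ))
            (x, pi t x lam μ)
            (0, fderiv ℝ (fun x' : Fin n → ℝ => pi t x' lam μ) x (Pi.single j 1))
            (0, fderiv ℝ (fun x' : Fin n → ℝ => pi t x' lam μ) x (Pi.single i 1)) :=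
    regular_hessian hF hP (fun x' => hstat t x' lam μ) x (Pi.single i 1) (Pi.single j 1)
  rw [key]
  congr 1
  set B := fderiv ℝ (fderiv ℝ (fun p : (Fin n → ℝ) × (Fin m → ℝ) => H t p.1 lam p.2 μ))
    (x, pi t x lam μ) with hBdef
  set DP := fderiv ℝ (fun x' : Fin n → ℝ => pi t x' lam μ) x with hDPdef
  have hsingle : ∀ wv : Fin m → ℝ,
      ((0 : Fin n → ℝ), wv)
        = ∑ k, wv k • ((0 : Fin n → ℝ), (Pi.single k 1 : Fin m → ℝ)) := by
    intro wv
    simp [Prod.ext_iff, Prod.fst_sum, Prod.snd_sum, Prod.smul_mk, ← Pi.single_smul,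
      Finset.univ_sum_single]
  have hsym2 : ∀ l k : Fin m,
      B (0, (Pi.single l 1 : Fin m → ℝ)) (0, (Pi.single k 1 : Fin m → ℝ))
        = B (0, (Pi.single k 1 : Fin m → ℝ)) (0, (Pi.single l 1 : Fin m → ℝ)) :=
    fun l k => snd_fderiv_symm hF _ _ _
  have expand : ∀ a b : Fin m → ℝ,
      B (0, a) (0, b)
        = ∑ l, ∑ k, a k * b l
            * B (0, (Pi.single k 1 : Fin m → ℝ)) (0, (Pi.single l 1 : Fin m → ℝ)) := by
    intro a b
    rw [hsingle a, hsingle b, map_sum]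
    simp only [_root_.map_smul, ContinuousLinearMap.coe_sum', Finset.sum_apply,
      ContinuousLinearMap.smul_apply, map_sum, smul_eq_mul, Finset.mul_sum]
    refine Finset.sum_congr rfl fun l _ => Finset.sum_congr rfl fun k _ => ?_
    ring
  have hM : ∀ l k : Fin m,
      fderiv ℝ (fun u => fderiv ℝ (fun u' => H t x lam u' μ) u (Pi.single k 1))
          (pi t x lam μ) (Pi.single l 1)
        = B (0, (Pi.single l 1 : Fin m → ℝ)) (0, (Pi.single k 1 : Fin m → ℝ)) :=
    fun l k => huu_entry hF x (pi t x lam μ) (Pi.single l 1) (Pi.single k 1)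
  rw [expand]
  simp only [Matrix.mul_apply, Matrix.transpose_apply, Matrix.of_apply, Finset.sum_mul, hM,
    ← hDPdef]
  rw [Finset.sum_comm]
  refine Finset.sum_congr rfl fun l _ => Finset.sum_congr rfl fun k _ => ?_
  rw [hsym2 l k]
  ring
end

section
/- For the disk Hamiltonian H = (α/2)(z_a − r(φ − φ_a) − z_d)² + (βr²/2)φ̇² + Σ_{i=1}^n (γᵢ/2)uᵢ² + δ + Σ_{i=1}^n λᵢθ̇ᵢ + Σ_{i=1}^n λ_{n+i}uᵢ + λ_{2n+1}φ̇ + λ_{2n+2}κ, the partial derivative of H with respect to the control component uᵢ (1 ≤ i ≤ n) equals γᵢuᵢ + λ_{n+i} + λ_{2n+2}·mᵢ[(r cos φ + ζ_{i,3}(θᵢ))ζ′_{i,1}(θᵢ) − (r sin φ + ζ_{i,1}(θᵢ))ζ′_{i,3}(θᵢ)]/D. -/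
open Finset

/-- `Kᵢ` from the rolling-disk equations of motion: with rail coordinates `ζ_{i,1} = z1`,
`ζ_{i,3} = z3` evaluated at `θᵢ = ti`, velocity `θ̇ᵢ = tdi`, control `uᵢ = ui`, orientation
`φ` and its rate `φ̇ = φd`. -/
noncomputable def diskK (r g : ℝ) (z1 z3 : ℝ → ℝ) (ti tdi ui φ φd : ℝ) : ℝ :=
  (g + r * φd ^ 2) * (z3 ti * Real.sin φ - z1 ti * Real.cos φ)
    + (r * Real.cos φ + z3 ti) *
        (-(2 * φd * tdi * deriv z3 ti) + tdi ^ 2 * deriv (deriv z1) ti + ui * deriv z1 ti)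
    - (r * Real.sin φ + z1 ti) *
        (2 * φd * tdi * deriv z1 ti + tdi ^ 2 * deriv (deriv z3) ti + ui * deriv z3 ti)

/-- `Pᵢ = (r sin φ + ζ_{i,1})² + (r cos φ + ζ_{i,3})²`. -/
noncomputable def diskP (r : ℝ) (z1 z3 : ℝ → ℝ) (ti φ : ℝ) : ℝ :=
  (r * Real.sin φ + z1 ti) ^ 2 + (r * Real.cos φ + z3 ti) ^ 2

/-- `N = −rF₁ + Σ_{i=0}^n mᵢKᵢ`; the static part (index `0`) carries mass `m0`, rail
coordinates `z01, z03`, parameter `t0`, velocity `td0` and control `u0`. -/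
noncomputable def diskN {n : ℕ} (r g F1 m0 t0 td0 u0 φ φd : ℝ) (z01 z03 : ℝ → ℝ)
    (m : Fin n → ℝ) (z1 z3 : Fin n → ℝ → ℝ) (θ θd u : Fin n → ℝ) : ℝ :=
  -(r * F1) + m0 * diskK r g z01 z03 t0 td0 u0 φ φd
    + ∑ i, m i * diskK r g (z1 i) (z3 i) (θ i) (θd i) (u i) φ φd

/-- `D = d₂ + Σ_{i=0}^n mᵢPᵢ`. -/
noncomputable def diskD {n : ℕ} (r d2 m0 t0 φ : ℝ) (z01 z03 : ℝ → ℝ)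
    (m : Fin n → ℝ) (z1 z3 : Fin n → ℝ → ℝ) (θ : Fin n → ℝ) : ℝ :=
  d2 + m0 * diskP r z01 z03 t0 φ + ∑ i, m i * diskP r (z1 i) (z3 i) (θ i) φ

/-- The rolling-disk Hamiltonian
`H = (α/2)(z_a − r(φ−φ_a) − z_d)² + (βr²/2)φ̇² + Σ (γᵢ/2)uᵢ² + δ
      + Σ λᵢθ̇ᵢ + Σ λ_{n+i}uᵢ + λ_{2n+1}φ̇ + λ_{2n+2}κ`, viewed as a function of the
control `u`; here `lam1 i = λᵢ`, `lam2 i = λ_{n+i}`, `lam3 = λ_{2n+1}`, `lam4 = λ_{2n+2}`,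
and `κ = N/D`. -/
noncomputable def diskHam {n : ℕ} (r g d2 F1 m0 t0 td0 u0 φ φd : ℝ) (z01 z03 : ℝ → ℝ)
    (m : Fin n → ℝ) (z1 z3 : Fin n → ℝ → ℝ) (θ θd : Fin n → ℝ)
    (α β δ za φa zd lam3 lam4 : ℝ) (γ lam1 lam2 : Fin n → ℝ) (u : Fin n → ℝ) : ℝ :=
  α / 2 * (za - r * (φ - φa) - zd) ^ 2 + β * r ^ 2 / 2 * φd ^ 2
    + (∑ j, γ j / 2 * u j ^ 2) + δ + (∑ j, lam1 j * θd j) + (∑ j, lam2 j * u j)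
    + lam3 * φd
    + lam4 * (diskN r g F1 m0 t0 td0 u0 φ φd z01 z03 m z1 z3 θ θd u
        / diskD r d2 m0 t0 φ z01 z03 m z1 z3 θ)

/-- For the disk Hamiltonian, the partial derivative with respect to the
control component `uᵢ` (`1 ≤ i ≤ n`) equals
`γᵢuᵢ + λ_{n+i} + λ_{2n+2}·mᵢ[(r cos φ + ζ_{i,3})ζ′_{i,1} − (r sin φ + ζ_{i,1})ζ′_{i,3}]/D`. -/
theorem stmt5 {n : ℕ}
    (r g d2 F1 m0 t0 td0 u0 φ φd : ℝ) (z01 z03 : ℝ → ℝ)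
    (m : Fin n → ℝ) (z1 z3 : Fin n → ℝ → ℝ) (θ θd u : Fin n → ℝ)
    (α β δ za φa zd lam3 lam4 : ℝ) (γ lam1 lam2 : Fin n → ℝ)
    (hz01 : ∀ x y, z01 x = z01 y) (hz03 : ∀ x y, z03 x = z03 y)
    (htd0 : td0 = 0) (hu0 : u0 = 0)
    (hz1 : ∀ i, ContDiff ℝ 3 (z1 i)) (hz3 : ∀ i, ContDiff ℝ 3 (z3 i))
    (hD : diskD r d2 m0 t0 φ z01 z03 m z1 z3 θ ≠ 0)
    (i : Fin n) :
    HasDerivAt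
      (fun v : ℝ =>
        diskHam r g d2 F1 m0 t0 td0 u0 φ φd z01 z03 m z1 z3 θ θd
          α β δ za φa zd lam3 lam4 γ lam1 lam2 (Function.update u i v))
      (γ i * u i + lam2 i
        + lam4 * (m i * ((r * Real.cos φ + z3 i (θ i)) * deriv (z1 i) (θ i)
              - (r * Real.sin φ + z1 i (θ i)) * deriv (z3 i) (θ i))
            / diskD r d2 m0 t0 φ z01 z03 m z1 z3 θ))
      (u i) := by
  classical
  set D := diskD r d2 m0 t0 φ z01 z03 m z1 z3 θ with hDdef
  set L := (r * Real.cos φ + z3 i (θ i)) * deriv (z1 i) (θ i)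
      - (r * Real.sin φ + z1 i (θ i)) * deriv (z3 i) (θ i) with hL
  set C1 := lam2 i + lam4 * (m i * L / D) with hC1
  set C0 := α / 2 * (za - r * (φ - φa) - zd) ^ 2 + β * r ^ 2 / 2 * φd ^ 2
      + (∑ j ∈ Finset.univ.erase i, γ j / 2 * u j ^ 2) + δ
      + (∑ j, lam1 j * θd j) + (∑ j ∈ Finset.univ.erase i, lam2 j * u j)
      + lam3 * φd
      + lam4 * ((-(r * F1) + m0 * diskK r g z01 z03 t0 td0 u0 φ φd
          + (m i * diskK r g (z1 i) (z3 i) (θ i) (θd i) 0 φ φd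
            + ∑ j ∈ Finset.univ.erase i,
                m j * diskK r g (z1 j) (z3 j) (θ j) (θd j) (u j) φ φd)) / D) with hC0
  have key : ∀ v : ℝ,
      diskHam r g d2 F1 m0 t0 td0 u0 φ φd z01 z03 m z1 z3 θ θd
        α β δ za φa zd lam3 lam4 γ lam1 lam2 (Function.update u i v)
      = C0 + C1 * v + γ i / 2 * v ^ 2 := by
    intro v
    have h1 : ∑ j ∈ Finset.univ.erase i, γ j / 2 * (Function.update u i v j) ^ 2
        = ∑ j ∈ Finset.univ.erase i, γ j / 2 * u j ^ 2 :=
      Finset.sum_congr rfl fun j hj => by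
        rw [Function.update_of_ne (Finset.ne_of_mem_erase hj)]
    have h2 : ∑ j ∈ Finset.univ.erase i, lam2 j * (Function.update u i v j)
        = ∑ j ∈ Finset.univ.erase i, lam2 j * u j :=
      Finset.sum_congr rfl fun j hj => by
        rw [Function.update_of_ne (Finset.ne_of_mem_erase hj)]
    have h3 : ∑ j ∈ Finset.univ.erase i,
          m j * diskK r g (z1 j) (z3 j) (θ j) (θd j) (Function.update u i v j) φ φd
        = ∑ j ∈ Finset.univ.erase i,
          m j * diskK r g (z1 j) (z3 j) (θ j) (θd j) (u j) φ φd :=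
      Finset.sum_congr rfl fun j hj => by
        rw [Function.update_of_ne (Finset.ne_of_mem_erase hj)]
    simp only [diskHam, diskN,
      ← Finset.add_sum_erase _ (fun j => γ j / 2 * (Function.update u i v j) ^ 2)
        (Finset.mem_univ i),
      ← Finset.add_sum_erase _ (fun j => lam2 j * (Function.update u i v j))
        (Finset.mem_univ i),
      ← Finset.add_sum_erase _
        (fun j => m j * diskK r g (z1 j) (z3 j) (θ j) (θd j) (Function.update u i v j) φ φd)
        (Finset.mem_univ i)]
    rw [h1, h2, h3, Function.update_self, hC0, hC1, hL]
    simp only [diskK]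
    ring
  have hder : HasDerivAt (fun v : ℝ => C0 + C1 * v + γ i / 2 * v ^ 2)
      (0 + C1 * 1 + γ i / 2 * (2 * u i ^ 1)) (u i) :=
    ((hasDerivAt_const _ _).add ((hasDerivAt_id (u i)).const_mul C1)).add
      (((hasDerivAt_pow 2 (u i))).const_mul (γ i / 2))
  have hfun : (fun v : ℝ =>
      diskHam r g d2 F1 m0 t0 td0 u0 φ φd z01 z03 m z1 z3 θ θd
        α β δ za φa zd lam3 lam4 γ lam1 lam2 (Function.update u i v))
      = fun v : ℝ => C0 + C1 * v + γ i / 2 * v ^ 2 := funext key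
  rw [hfun]
  convert hder using 1
  rw [hC1]
  ring
end

section
/- Assume γᵢ > 0 for all 1 ≤ i ≤ n. Then the gradient of the disk Hamiltonian H = (α/2)(z_a − r(φ − φ_a) − z_d)² + (βr²/2)φ̇² + Σ_{i=1}^n (γᵢ/2)uᵢ² + δ + Σ_{i=1}^n λᵢθ̇ᵢ + Σ_{i=1}^n λ_{n+i}uᵢ + λ_{2n+1}φ̇ + λ_{2n+2}κ with respect to the control u vanishes if and only if, for every 1 ≤ i ≤ n, uᵢ = −γᵢ⁻¹{λ_{n+i} + λ_{2n+2}·mᵢ[(r cos φ + ζ_{i,3}(θᵢ))ζ′_{i,1}(θᵢ) − (r sin φ + ζ_{i,1}(θᵢ))ζ′_{i,3}(θᵢ)]/D}. -/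
open Finset

/-- Assume `γᵢ > 0` for all `i`. Then the gradient of the disk Hamiltonian
with respect to the control `u` vanishes iff, for every `i`,
`uᵢ = −γᵢ⁻¹{λ_{n+i} + λ_{2n+2}·mᵢ[(r cos φ + ζ_{i,3})ζ′_{i,1} − (r sin φ + ζ_{i,1})ζ′_{i,3}]/D}`. -/
theorem stmt7 {n : ℕ}
    (r g d2 F1 m0 t0 td0 u0 φ φd : ℝ) (z01 z03 : ℝ → ℝ)
    (m : Fin n → ℝ) (z1 z3 : Fin n → ℝ → ℝ) (θ θd u : Fin n → ℝ)
    (α β δ za φa zd lam3 lam4 : ℝ) (γ lam1 lam2 : Fin n → ℝ)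
    (hz01 : ∀ x y, z01 x = z01 y) (hz03 : ∀ x y, z03 x = z03 y)
    (htd0 : td0 = 0) (hu0 : u0 = 0)
    (hz1 : ∀ i, ContDiff ℝ 3 (z1 i)) (hz3 : ∀ i, ContDiff ℝ 3 (z3 i))
    (hD : diskD r d2 m0 t0 φ z01 z03 m z1 z3 θ ≠ 0)
    (hγ : ∀ i, 0 < γ i) :
    fderiv ℝ
        (diskHam r g d2 F1 m0 t0 td0 u0 φ φd z01 z03 m z1 z3 θ θd
          α β δ za φa zd lam3 lam4 γ lam1 lam2) u = 0
      ↔ ∀ i : Fin n,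
          u i = -(γ i)⁻¹ *
            (lam2 i
              + lam4 * (m i * ((r * Real.cos φ + z3 i (θ i)) * deriv (z1 i) (θ i)
                    - (r * Real.sin φ + z1 i (θ i)) * deriv (z3 i) (θ i))
                  / diskD r d2 m0 t0 φ z01 z03 m z1 z3 θ)) := by
  classical
  set D : ℝ := diskD r d2 m0 t0 φ z01 z03 m z1 z3 θ with hDdef
  set c : Fin n → ℝ := fun i =>
    lam2 i + lam4 * (m i * ((r * Real.cos φ + z3 i (θ i)) * deriv (z1 i) (θ i)
      - (r * Real.sin φ + z1 i (θ i)) * deriv (z3 i) (θ i)) / D) with hc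
  set C : ℝ := α / 2 * (za - r * (φ - φa) - zd) ^ 2 + β * r ^ 2 / 2 * φd ^ 2 + δ
      + (∑ j, lam1 j * θd j) + lam3 * φd
      + lam4 * ((-(r * F1) + m0 * diskK r g z01 z03 t0 td0 u0 φ φd) / D)
      + ∑ j, lam4 * (m j * diskK r g (z1 j) (z3 j) (θ j) (θd j) 0 φ φd / D) with hC
  have hH : diskHam r g d2 F1 m0 t0 td0 u0 φ φd z01 z03 m z1 z3 θ θd
      α β δ za φa zd lam3 lam4 γ lam1 lam2
      = fun v => C + ∑ j, (γ j / 2 * v j ^ 2 + c j * v j) := by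
    funext v
    have hterm : ∀ j : Fin n,
        lam4 * (m j * diskK r g (z1 j) (z3 j) (θ j) (θd j) (v j) φ φd / D)
          = lam4 * (m j * diskK r g (z1 j) (z3 j) (θ j) (θd j) 0 φ φd / D)
            + (c j - lam2 j) * v j := by
      intro j
      simp only [hc, diskK]
      field_simp
      ring
    have hsplit : lam4 * (diskN r g F1 m0 t0 td0 u0 φ φd z01 z03 m z1 z3 θ θd v / D)
        = lam4 * ((-(r * F1) + m0 * diskK r g z01 z03 t0 td0 u0 φ φd) / D)
          + ∑ j, lam4 * (m j * diskK r g (z1 j) (z3 j) (θ j) (θd j) (v j) φ φd / D) := by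
      simp only [diskN, add_div, Finset.sum_div, mul_add, Finset.mul_sum, mul_div_assoc]
    simp only [diskHam, hC]
    rw [hsplit, Finset.sum_congr rfl fun j _ => hterm j, Finset.sum_add_distrib]
    have : ∀ j : Fin n, γ j / 2 * v j ^ 2 + c j * v j
        = γ j / 2 * v j ^ 2 + lam2 j * v j + (c j - lam2 j) * v j := fun j => by ring
    rw [Finset.sum_congr rfl fun j _ => this j]
    simp only [Finset.sum_add_distrib]
    ring
  rw [hH]
  set L : (Fin n → ℝ) →L[ℝ] ℝ :=
    ∑ j, (γ j * u j + c j) • (ContinuousLinearMap.proj j : (Fin n → ℝ) →L[ℝ] ℝ) with hL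
  have hder : HasFDerivAt (fun v : Fin n → ℝ => C + ∑ j, (γ j / 2 * v j ^ 2 + c j * v j)) L u := by
    have h1 : HasFDerivAt (fun v : Fin n → ℝ => ∑ j, (γ j / 2 * v j ^ 2 + c j * v j)) L u := by
      rw [hL]
      apply HasFDerivAt.fun_sum
      intro j _
      have hg : HasDerivAt (fun t : ℝ => γ j / 2 * t ^ 2 + c j * t) (γ j * u j + c j) (u j) := by
        have := ((hasDerivAt_pow 2 (u j)).const_mul (γ j / 2)).add
          ((hasDerivAt_id (u j)).const_mul (c j))
        refine this.congr_deriv ?_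
        norm_num
        ring
      have hp : HasFDerivAt (fun v : Fin n → ℝ => v j)
          (ContinuousLinearMap.proj j : (Fin n → ℝ) →L[ℝ] ℝ) u :=
        (ContinuousLinearMap.proj j : (Fin n → ℝ) →L[ℝ] ℝ).hasFDerivAt
      exact hg.comp_hasFDerivAt u hp
    exact h1.const_add C
  rw [hder.fderiv]
  constructor
  · intro h0 i
    have := congrArg (fun T : (Fin n → ℝ) →L[ℝ] ℝ => T (Pi.single i 1)) h0
    simp only [hL, ContinuousLinearMap.sum_apply, ContinuousLinearMap.smul_apply,
      ContinuousLinearMap.proj_apply, ContinuousLinearMap.zero_apply, smul_eq_mul] at this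
    rw [Finset.sum_eq_single i (fun j _ hj => by simp [Pi.single_apply, hj])
      (fun h => absurd (Finset.mem_univ i) h)] at this
    simp only [Pi.single_apply, if_pos rfl, mul_one] at this
    rw [if_pos trivial, mul_one] at this
    have hγi : γ i ≠ 0 := (hγ i).ne'
    show u i = -(γ i)⁻¹ * c i
    have h2 : γ i * u i = -(c i) := by linarith
    calc u i = (γ i)⁻¹ * (γ i * u i) := (inv_mul_cancel_left₀ hγi _).symm
      _ = -(γ i)⁻¹ * c i := by rw [h2]; ring
  · intro h
    rw [hL]
    ext v
    simp only [ContinuousLinearMap.sum_apply, ContinuousLinearMap.smul_apply,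
      ContinuousLinearMap.proj_apply, ContinuousLinearMap.zero_apply, smul_eq_mul]
    apply Finset.sum_eq_zero
    intro j _
    have hγj : γ j ≠ 0 := (hγ j).ne'
    have huj : u j = -(γ j)⁻¹ * c j := h j
    have : γ j * u j + c j = 0 := by
      rw [huj, neg_mul, mul_neg, mul_inv_cancel_left₀ hγj, neg_add_cancel]
    rw [this, zero_mul]
end
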